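/- Under Assumptions: (i) ‖∇_θ f_i(x,θ)‖ ≤ L_θ, (ii) ‖∇_θ f_i(x,θ₁) − ∇_θ f_i(x,θ₂)‖ ≤ L_θθ‖θ₁−θ₂‖, (iii) ‖∇_θ f_i(x₁,θ) − ∇_θ f_i(x₂,θ)‖ ≤ L_θx‖x₁−x₂‖. Let δ₁, δ₂ be maximizers of the cross-entropy loss over the adversarial budget at θ₁, θ₂ respectively. Then ‖∇_θ L(x+δ₁,θ₁) − ∇_θ L(x+δ₂,θ₂)‖ ≤ L_θθ‖θ₁−θ₂‖ + L_θx‖δ₁−δ₂‖ + 4L_θ. -/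

import Mathlib

open scoped BigOperators

/-- Theorem 2 (Lipschitz smoothness of the adversarial loss): the gradient of the
cross-entropy loss evaluated at the respective maximizers satisfies the stated bound. -/
theorem adversarial_loss_grad_smoothness
    {Θ X E : Type*} [NormedAddCommGroup Θ] [NormedAddCommGroup X]
    [NormedAddCommGroup E] [NormedSpace ℝ E]
    {K : ℕ} (f : Fin K → X → Θ → ℝ) (Df : Fin K → X → Θ → E)
    (y : Fin K → ℝ) (Lθ Lθθ Lθx : ℝ)
    (hy_nonneg : ∀ i, 0 ≤ y i) (hy_sum : ∑ i, y i = 1)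
    (hDf_bound : ∀ i x θ, ‖Df i x θ‖ ≤ Lθ)
    (hDf_lip_θ : ∀ i x (θ₁ θ₂ : Θ), ‖Df i x θ₁ - Df i x θ₂‖ ≤ Lθθ * ‖θ₁ - θ₂‖)
    (hDf_lip_x : ∀ i (x₁ x₂ : X) θ, ‖Df i x₁ θ - Df i x₂ θ‖ ≤ Lθx * ‖x₁ - x₂‖)
    (h : Fin K → X → Θ → ℝ)
    (hh : ∀ i x θ, h i x θ = Real.exp (f i x θ) / ∑ j, Real.exp (f j x θ))
    (L : X → Θ → ℝ)
    (hL : ∀ x θ, L x θ =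
      -∑ i, y i * Real.log (Real.exp (f i x θ) / ∑ j, Real.exp (f j x θ)))
    (gradL : X → Θ → E)
    (hgradL : ∀ x θ, gradL x θ =
      (∑ j, h j x θ • Df j x θ) - ∑ i, y i • Df i x θ)
    (S : Set X) (x : X) (θ₁ θ₂ : Θ) (δ₁ δ₂ : X)
    (hδ₁S : δ₁ ∈ S) (hδ₂S : δ₂ ∈ S)
    (hmax₁ : ∀ δ ∈ S, L (x + δ) θ₁ ≤ L (x + δ₁) θ₁)
    (hmax₂ : ∀ δ ∈ S, L (x + δ) θ₂ ≤ L (x + δ₂) θ₂) :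
    ‖gradL (x + δ₁) θ₁ - gradL (x + δ₂) θ₂‖ ≤
      Lθθ * ‖θ₁ - θ₂‖ + Lθx * ‖δ₁ - δ₂‖ + 4 * Lθ := by
  have hK : 0 < K := by
    rcases Nat.eq_zero_or_pos K with hK0 | hK0
    · subst hK0; simp at hy_sum
    · exact hK0
  have hLθ : 0 ≤ Lθ := le_trans (norm_nonneg _) (hDf_bound ⟨0, hK⟩ x θ₁)
  set x₁ := x + δ₁ with hx₁
  set x₂ := x + δ₂ with hx₂
  have hx : x₁ - x₂ = δ₁ - δ₂ := by rw [hx₁, hx₂]; abel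
  have hsum : ∀ (xx : X) (θ : Θ), ∑ j, h j xx θ = 1 := by
    intro xx θ
    have hpos : 0 < ∑ j, Real.exp (f j xx θ) :=
      Finset.sum_pos (fun j _ => Real.exp_pos _)
        (Finset.univ_nonempty_iff.mpr (Fin.pos_iff_nonempty.mp hK))
    simp only [hh]
    rw [← Finset.sum_div, div_self hpos.ne']
  have hnn : ∀ i xx θ, 0 ≤ h i xx θ := by
    intro i xx θ
    rw [hh]
    positivity
  have hterm : ∀ (xx : X) (θ : Θ), ‖∑ j, h j xx θ • Df j xx θ‖ ≤ Lθ := by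
    intro xx θ
    calc ‖∑ j, h j xx θ • Df j xx θ‖ ≤ ∑ j, ‖h j xx θ • Df j xx θ‖ := norm_sum_le _ _
      _ ≤ ∑ j, h j xx θ * Lθ := Finset.sum_le_sum (fun j _ => by
          rw [norm_smul, Real.norm_eq_abs, abs_of_nonneg (hnn j xx θ)]
          exact mul_le_mul_of_nonneg_left (hDf_bound j xx θ) (hnn j xx θ))
      _ = Lθ := by rw [← Finset.sum_mul, hsum, one_mul]
  have hyterm : ‖(∑ i, y i • Df i x₁ θ₁) - ∑ i, y i • Df i x₂ θ₂‖ ≤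
      Lθθ * ‖θ₁ - θ₂‖ + Lθx * ‖δ₁ - δ₂‖ := by
    rw [← Finset.sum_sub_distrib]
    calc ‖∑ i, (y i • Df i x₁ θ₁ - y i • Df i x₂ θ₂)‖
        ≤ ∑ i, ‖y i • (Df i x₁ θ₁ - Df i x₂ θ₂)‖ := by
          simp only [smul_sub]; exact norm_sum_le _ _
      _ ≤ ∑ i, y i * (Lθθ * ‖θ₁ - θ₂‖ + Lθx * ‖δ₁ - δ₂‖) := Finset.sum_le_sum (fun i _ => by
          rw [norm_smul, Real.norm_eq_abs, abs_of_nonneg (hy_nonneg i)]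
          refine mul_le_mul_of_nonneg_left ?_ (hy_nonneg i)
          calc ‖Df i x₁ θ₁ - Df i x₂ θ₂‖
              ≤ ‖Df i x₁ θ₁ - Df i x₁ θ₂‖ + ‖Df i x₁ θ₂ - Df i x₂ θ₂‖ :=
                norm_sub_le_norm_sub_add_norm_sub _ _ _
            _ ≤ Lθθ * ‖θ₁ - θ₂‖ + Lθx * ‖δ₁ - δ₂‖ := by
                have h2 := hDf_lip_x i x₁ x₂ θ₂
                rw [hx] at h2
                exact add_le_add (hDf_lip_θ i x₁ θ₁ θ₂) h2)
      _ = Lθθ * ‖θ₁ - θ₂‖ + Lθx * ‖δ₁ - δ₂‖ := by rw [← Finset.sum_mul, hy_sum, one_mul]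
  rw [hgradL, hgradL]
  have key : (∑ j, h j x₁ θ₁ • Df j x₁ θ₁) - (∑ i, y i • Df i x₁ θ₁) -
      ((∑ j, h j x₂ θ₂ • Df j x₂ θ₂) - ∑ i, y i • Df i x₂ θ₂) =
      (∑ j, h j x₁ θ₁ • Df j x₁ θ₁) + (-(∑ j, h j x₂ θ₂ • Df j x₂ θ₂)) +
      (-((∑ i, y i • Df i x₁ θ₁) - ∑ i, y i • Df i x₂ θ₂)) := by abel
  rw [key]
  calc ‖_ + _ + _‖ ≤ ‖(∑ j, h j x₁ θ₁ • Df j x₁ θ₁) + (-(∑ j, h j x₂ θ₂ • Df j x₂ θ₂))‖ +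
        ‖-((∑ i, y i • Df i x₁ θ₁) - ∑ i, y i • Df i x₂ θ₂)‖ := norm_add_le _ _
    _ ≤ (‖∑ j, h j x₁ θ₁ • Df j x₁ θ₁‖ + ‖-(∑ j, h j x₂ θ₂ • Df j x₂ θ₂)‖) +
        ‖(∑ i, y i • Df i x₁ θ₁) - ∑ i, y i • Df i x₂ θ₂‖ := by
        rw [norm_neg]; exact add_le_add (norm_add_le _ _) le_rfl
    _ ≤ (Lθ + Lθ) + (Lθθ * ‖θ₁ - θ₂‖ + Lθx * ‖δ₁ - δ₂‖) := by
        rw [norm_neg]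
        exact add_le_add (add_le_add (hterm _ _) (hterm _ _)) hyterm
    _ ≤ Lθθ * ‖θ₁ - θ₂‖ + Lθx * ‖δ₁ - δ₂‖ + 4 * Lθ := by linarith
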